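/- Let A : H → 2^H be maximal monotone with zer A ≠ ∅ and M an admissible preconditioner such that (M+A)⁻¹ is L-Lipschitz. Then the sequence {T u^k} generated by the relaxed preconditioned proximal point iteration u^{k+1} = u^k + λ_k(T u^k − u^k), with λ_k ∈ [0,2] and Σ λ_k(2−λ_k) = +∞, converges weakly to a point u* ∈ Fix T, i.e., a zero of A. If moreover 0 < inf λ_k ≤ sup λ_k < 2, then {u^k} converges weakly to u*. -/

import Mathlib

open Filter Topology

lemma weakBW {H : Type} [NormedAddCommGroup H] [InnerProductSpace ℝ H] [CompleteSpace H]
    (x : ℕ → H) (C : ℝ) (hC : ∀ n, ‖x n‖ ≤ C) :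
    ∃ (p : H) (φ : ℕ → ℕ), StrictMono φ ∧
      ∀ v : H, Tendsto (fun j => (inner ℝ (x (φ j)) v : ℝ)) atTop (𝓝 (inner ℝ p v)) := by
  have hC0 : 0 ≤ C := le_trans (norm_nonneg _) (hC 0)
  have hC' : ∀ n m : ℕ, (inner ℝ (x n) (x m) : ℝ) ∈ Set.Icc (-(C*C)) (C*C) := by
    intro n m
    have h1 : |(inner ℝ (x n) (x m) : ℝ)| ≤ ‖x n‖ * ‖x m‖ := abs_real_inner_le_norm _ _
    have h2 : ‖x n‖ * ‖x m‖ ≤ C * C :=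
      mul_le_mul (hC n) (hC m) (norm_nonneg _) hC0
    constructor
    · nlinarith [abs_nonneg (inner ℝ (x n) (x m) : ℝ), neg_abs_le (inner ℝ (x n) (x m) : ℝ)]
    · nlinarith [le_abs_self (inner ℝ (x n) (x m) : ℝ)]
  set g : ℕ → ∀ _ : ℕ, (Set.Icc (-(C*C)) (C*C) : Set ℝ) :=
    fun n m => ⟨inner ℝ (x n) (x m), hC' n m⟩ with hg_def
  have hseq : IsSeqCompact (Set.univ : Set (∀ _ : ℕ, (Set.Icc (-(C*C)) (C*C) : Set ℝ))) :=
    isCompact_univ.isSeqCompact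
  obtain ⟨G, -, φ, hφ, hg⟩ := hseq (fun n => Set.mem_univ (g n))
  have hpt : ∀ m : ℕ, Tendsto (fun j => (inner ℝ (x (φ j)) (x m) : ℝ)) atTop (𝓝 (G m : ℝ)) := by
    intro m
    have := (tendsto_pi_nhds.1 hg) m
    exact (continuous_subtype_val.tendsto (G m)).comp this
  -- Cauchy for every v
  set K := (Submodule.span ℝ (Set.range x)).topologicalClosure with hK_def
  have hxK : ∀ n, x n ∈ K := fun n =>
    (Submodule.le_topologicalClosure _) (Submodule.subset_span (Set.mem_range_self n))
  have hbound : ∀ (n : ℕ) (a b : H), |(inner ℝ (x n) a : ℝ) - inner ℝ (x n) b| ≤ C * ‖a - b‖ := by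
    intro n a b
    rw [← inner_sub_right]
    calc |(inner ℝ (x n) (a - b) : ℝ)| ≤ ‖x n‖ * ‖a - b‖ := abs_real_inner_le_norm _ _
      _ ≤ C * ‖a - b‖ := mul_le_mul_of_nonneg_right (hC n) (norm_nonneg _)
  have hspan : ∀ w ∈ Submodule.span ℝ (Set.range x),
      ∃ l : ℝ, Tendsto (fun j => (inner ℝ (x (φ j)) w : ℝ)) atTop (𝓝 l) := by
    intro w hw
    induction hw using Submodule.span_induction with
    | mem w hw =>
        obtain ⟨m, rfl⟩ := hw
        exact ⟨G m, hpt m⟩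
    | zero => exact ⟨0, by simpa using tendsto_const_nhds⟩
    | add a b _ _ ha hb =>
        obtain ⟨la, hla⟩ := ha; obtain ⟨lb, hlb⟩ := hb
        refine ⟨la + lb, ?_⟩
        have : (fun j => (inner ℝ (x (φ j)) (a + b) : ℝ))
            = fun j => (inner ℝ (x (φ j)) a : ℝ) + inner ℝ (x (φ j)) b := by
          funext j; rw [inner_add_right]
        rw [this]; exact hla.add hlb
    | smul c a _ ha =>
        obtain ⟨la, hla⟩ := ha
        refine ⟨c * la, ?_⟩
        have : (fun j => (inner ℝ (x (φ j)) (c • a) : ℝ))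
            = fun j => c * (inner ℝ (x (φ j)) a : ℝ) := by
          funext j; rw [real_inner_smul_right]
        rw [this]; exact hla.const_mul c
  have hcauchyK : ∀ w ∈ K, CauchySeq (fun j => (inner ℝ (x (φ j)) w : ℝ)) := by
    intro w hw
    rw [Metric.cauchySeq_iff]
    intro ε hε
    have hw' : w ∈ closure ((Submodule.span ℝ (Set.range x) : Set H)) := by
      rw [← Submodule.topologicalClosure_coe]; exact hw
    obtain ⟨w', hw'mem, hww'⟩ := Metric.mem_closure_iff.1 hw' (ε / (4 * (C + 1)))
      (by positivity)
    obtain ⟨l', hl'⟩ := hspan w' hw'mem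
    have hcs := (Metric.cauchySeq_iff.1 hl'.cauchySeq) (ε / 4) (by positivity)
    obtain ⟨N, hN⟩ := hcs
    refine ⟨N, fun m hm n hn => ?_⟩
    have hd : ∀ j : ℕ, dist ((inner ℝ (x (φ j)) w : ℝ)) ((inner ℝ (x (φ j)) w' : ℝ)) ≤ ε / 4 := by
      intro j
      rw [Real.dist_eq]
      calc |(inner ℝ (x (φ j)) w : ℝ) - inner ℝ (x (φ j)) w'| ≤ C * ‖w - w'‖ := hbound _ _ _
        _ ≤ C * (ε / (4 * (C + 1))) := by
            apply mul_le_mul_of_nonneg_left _ hC0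
            rw [← dist_eq_norm]; exact le_of_lt hww'
        _ ≤ ε / 4 := by
            have h1 : (0:ℝ) < C + 1 := by linarith
            rw [div_mul_eq_div_div]
            calc C * (ε / 4 / (C + 1)) = (ε / 4) * (C / (C + 1)) := by ring
              _ ≤ (ε / 4) * 1 :=
                  mul_le_mul_of_nonneg_left ((div_le_one h1).2 (by linarith)) (by positivity)
              _ = ε / 4 := mul_one _
    have htri := dist_triangle4 ((inner ℝ (x (φ m)) w : ℝ)) ((inner ℝ (x (φ m)) w' : ℝ))
      ((inner ℝ (x (φ n)) w' : ℝ)) ((inner ℝ (x (φ n)) w : ℝ))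
    have h3 : dist ((inner ℝ (x (φ n)) w' : ℝ)) ((inner ℝ (x (φ n)) w : ℝ)) ≤ ε / 4 := by
      rw [dist_comm]; exact hd n
    have h4 := hN m hm n hn
    have h5 := hd m
    linarith
  haveI : CompleteSpace K := (Submodule.isClosed_topologicalClosure _).completeSpace_coe
  have hcauchy : ∀ v : H, CauchySeq (fun j => (inner ℝ (x (φ j)) v : ℝ)) := by
    intro v
    have hPv : ((K.orthogonalProjectionOnto v : K) : H) ∈ K := (K.orthogonalProjectionOnto v).2
    have heq : ∀ n, (inner ℝ (x n) v : ℝ) = inner ℝ (x n) ((K.orthogonalProjectionOnto v : K) : H) := by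
      intro n
      have hperp : v - K.orthogonalProjectionOnto v ∈ Kᗮ := Submodule.sub_starProjection_mem_orthogonal (K := K) v
      have h2 : (inner ℝ (x n) (v - K.orthogonalProjectionOnto v) : ℝ) = 0 :=
        (Submodule.mem_orthogonal K _).1 hperp (x n) (hxK n)
      rw [inner_sub_right] at h2; linarith
    simp only [heq]
    exact hcauchyK _ hPv
  have hconv : ∀ v : H, ∃ l : ℝ, Tendsto (fun j => (inner ℝ (x (φ j)) v : ℝ)) atTop (𝓝 l) :=
    fun v => cauchySeq_tendsto_of_complete (hcauchy v)
  choose f hf using hconv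
  have hf_add : ∀ a b, f (a + b) = f a + f b := by
    intro a b
    have h1 : Tendsto (fun j => (inner ℝ (x (φ j)) (a + b) : ℝ)) atTop (𝓝 (f a + f b)) := by
      have he : (fun j => (inner ℝ (x (φ j)) (a + b) : ℝ))
          = fun j => (inner ℝ (x (φ j)) a : ℝ) + inner ℝ (x (φ j)) b := by
        funext j; rw [inner_add_right]
      rw [he]; exact (hf a).add (hf b)
    exact tendsto_nhds_unique (hf (a + b)) h1
  have hf_smul : ∀ (c : ℝ) (a : H), f (c • a) = c * f a := by
    intro c a
    have h1 : Tendsto (fun j => (inner ℝ (x (φ j)) (c • a) : ℝ)) atTop (𝓝 (c * f a)) := by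
      have he : (fun j => (inner ℝ (x (φ j)) (c • a) : ℝ))
          = fun j => c * (inner ℝ (x (φ j)) a : ℝ) := by
        funext j; rw [real_inner_smul_right]
      rw [he]; exact (hf a).const_mul c
    exact tendsto_nhds_unique (hf (c • a)) h1
  have hf_bdd : ∀ v : H, ‖f v‖ ≤ C * ‖v‖ := by
    intro v
    have habs : Tendsto (fun j => |(inner ℝ (x (φ j)) v : ℝ)|) atTop (𝓝 |f v|) := (hf v).abs
    rw [Real.norm_eq_abs]
    refine le_of_tendsto habs (Filter.Eventually.of_forall fun j => ?_)
    calc |(inner ℝ (x (φ j)) v : ℝ)| ≤ ‖x (φ j)‖ * ‖v‖ := abs_real_inner_le_norm _ _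
      _ ≤ C * ‖v‖ := mul_le_mul_of_nonneg_right (hC _) (norm_nonneg _)
  let F : H →L[ℝ] ℝ := LinearMap.mkContinuous
    { toFun := f, map_add' := hf_add, map_smul' := hf_smul } C hf_bdd
  refine ⟨(InnerProductSpace.toDual ℝ H).symm F, φ, hφ, fun v => ?_⟩
  have hFv : (inner ℝ ((InnerProductSpace.toDual ℝ H).symm F) v : ℝ) = F v :=
    InnerProductSpace.toDual_symm_apply
  rw [hFv]
  exact hf v

lemma psdCS {H : Type} [NormedAddCommGroup H] [InnerProductSpace ℝ H]
    (M : H →L[ℝ] H)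
    (hMsa : ∀ x y : H, (inner ℝ (M x) y : ℝ) = inner ℝ x (M y))
    (hMpos : ∀ x : H, 0 ≤ (inner ℝ (M x) x : ℝ)) (x y : H) :
    (inner ℝ (M x) y : ℝ) ^ 2 ≤ (inner ℝ (M x) x : ℝ) * (inner ℝ (M y) y : ℝ) := by
  have hsym : ∀ a b : H, (inner ℝ (M a) b : ℝ) = inner ℝ (M b) a := fun a b =>
    (hMsa a b).trans (real_inner_comm a (M b)).symm
  have hq : ∀ t : ℝ, 0 ≤ (inner ℝ (M y) y : ℝ) * (t * t)
      + (2 * (inner ℝ (M x) y : ℝ)) * t + (inner ℝ (M x) x : ℝ) := by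
    intro t
    have h := hMpos (x + t • y)
    have hexp : (inner ℝ (M (x + t • y)) (x + t • y) : ℝ)
        = (inner ℝ (M y) y : ℝ) * (t * t) + (2 * (inner ℝ (M x) y : ℝ)) * t
          + (inner ℝ (M x) x : ℝ) := by
      simp only [map_add, map_smul, inner_add_left, inner_add_right,
        real_inner_smul_left, real_inner_smul_right]
      linear_combination t * hsym y x
    linarith [hexp ▸ h]
  have hd := discrim_le_zero hq
  rw [discrim] at hd
  nlinarith [hd]


/-- Convergence of the degenerate PPP method: if `A` is maximal monotone with a zero and
`(M+A)⁻¹` is `L`-Lipschitz, then `{T u^k}` converges weakly to a fixed point of `T`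
(a zero of `A`); if moreover `0 < inf λ_k ≤ sup λ_k < 2`, so does `{u^k}`. -/
theorem stmt8 {H : Type} [NormedAddCommGroup H] [InnerProductSpace ℝ H] [CompleteSpace H]
    (A : Set (H × H)) (M : H →L[ℝ] H) (T : H → H) (L : ℝ)
    (hMsa : ∀ x y : H, (inner ℝ (M x) y : ℝ) = inner ℝ x (M y))
    (hMpos : ∀ x : H, 0 ≤ (inner ℝ (M x) x : ℝ))
    -- `A` maximal monotone
    (hAmono : ∀ p ∈ A, ∀ q ∈ A, 0 ≤ (inner ℝ (p.2 - q.2) (p.1 - q.1) : ℝ))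
    (hAmax : ∀ p : H × H, (∀ q ∈ A, 0 ≤ (inner ℝ (p.2 - q.2) (p.1 - q.1) : ℝ)) → p ∈ A)
    -- `zer A ≠ ∅`
    (hzer : ∃ x : H, (x, (0 : H)) ∈ A)
    -- admissibility: `T = (M+A)⁻¹ M` single-valued with full domain
    (hT : ∀ u : H, (T u, M (u - T u)) ∈ A)
    (hTuniq : ∀ u v : H, (v, M (u - v)) ∈ A → v = T u)
    -- `(M+A)⁻¹` is `L`-Lipschitz
    (hLip : ∀ v v' u u' : H, (u, v - M u) ∈ A → (u', v' - M u') ∈ A →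
        ‖u - u'‖ ≤ L * ‖v - v'‖)
    (lam : ℕ → ℝ) (hlam : ∀ k, lam k ∈ Set.Icc (0 : ℝ) 2)
    (hdiv : Tendsto (fun n => ∑ k ∈ Finset.range n, lam k * (2 - lam k)) atTop atTop)
    (u : ℕ → H) (hiter : ∀ k, u (k + 1) = u k + lam k • (T (u k) - u k)) :
    ∃ ustar : H, T ustar = ustar ∧
      (∀ v : H, Tendsto (fun k => (inner ℝ (T (u k)) v : ℝ)) atTop (nhds (inner ℝ ustar v))) ∧
      ((∃ ε > (0 : ℝ), ∀ k, lam k ∈ Set.Icc ε (2 - ε)) →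
        ∀ v : H, Tendsto (fun k => (inner ℝ (u k) v : ℝ)) atTop (nhds (inner ℝ ustar v))) := by
  classical
  have hsym : ∀ a b : H, (inner ℝ (M a) b : ℝ) = inner ℝ (M b) a := fun a b =>
    (hMsa a b).trans (real_inner_comm a (M b)).symm
  have hexpand : ∀ (p q : H) (c : ℝ), (inner ℝ (M (p + c • q)) (p + c • q) : ℝ)
      = inner ℝ (M p) p + 2 * c * inner ℝ (M q) p + c ^ 2 * inner ℝ (M q) q := by
    intro p q c
    simp only [map_add, map_smul, inner_add_left, inner_add_right,
      real_inner_smul_left, real_inner_smul_right]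
    linear_combination c * hsym p q
  have hexpand_sub : ∀ p q : H, (inner ℝ (M (p - q)) (p - q) : ℝ)
      = inner ℝ (M p) p - 2 * inner ℝ (M q) p + inner ℝ (M q) q := by
    intro p q
    simp only [map_sub, inner_sub_left, inner_sub_right]
    linear_combination hsym q p
  set d : ℕ → H := fun k => T (u k) - u k with hd_def
  set b : ℕ → ℝ := fun k => (inner ℝ (M (d k)) (d k) : ℝ) with hb_def
  -- every zero of A is a fixed point of T
  have hfix : ∀ z : H, (z, 0) ∈ A → T z = z := by
    intro z hz
    exact (hTuniq z z (by simpa using hz)).symm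
  -- key Fejér inequality
  have hkey : ∀ z : H, (z, 0) ∈ A → ∀ k,
      (inner ℝ (M (u (k + 1) - z)) (u (k + 1) - z) : ℝ)
        ≤ inner ℝ (M (u k - z)) (u k - z) - lam k * (2 - lam k) * b k := by
    intro z hz k
    have hmono := hAmono (T (u k), M (u k - T (u k))) (hT (u k)) (z, 0) hz
    simp only [sub_zero] at hmono
    have h1 : u (k + 1) - z = (u k - z) + lam k • d k := by
      rw [hiter k]; abel
    rw [h1, hexpand]
    have hdm : M (u k - T (u k)) = -M (d k) := by
      rw [← map_neg]; congr 1; simp only [hd_def]; abel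
    have h2 : (inner ℝ (M (d k)) (u k - z) : ℝ) ≤ -(inner ℝ (M (d k)) (d k) : ℝ) := by
      have hsplit : u k - z = -(d k) + (T (u k) - z) := by simp only [hd_def]; abel
      rw [hsplit, inner_add_right, inner_neg_right]
      have h3 : (inner ℝ (M (d k)) (T (u k) - z) : ℝ) ≤ 0 := by
        rw [hdm, inner_neg_left] at hmono; linarith
      linarith
    have h4 := mul_le_mul_of_nonneg_left h2 (hlam k).1
    simp only [hb_def]
    nlinarith [hMpos (d k), (hlam k).1, (hlam k).2]
  obtain ⟨z0, hz0⟩ := hzer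
  -- monotonicity of the Fejér quantity
  have haz : ∀ z : H, (z, 0) ∈ A →
      Antitone (fun k => (inner ℝ (M (u k - z)) (u k - z) : ℝ)) := by
    intro z hz
    apply antitone_nat_of_succ_le
    intro k
    have h1 := hkey z hz k
    have h2 : 0 ≤ lam k * (2 - lam k) * b k :=
      mul_nonneg (mul_nonneg (hlam k).1 (by linarith [(hlam k).2])) (hMpos (d k))
    linarith
  have hbdd : ∀ z : H, BddBelow (Set.range (fun k => (inner ℝ (M (u k - z)) (u k - z) : ℝ))) :=
    fun z => ⟨0, fun y ⟨k, hk⟩ => hk ▸ hMpos _⟩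
  have ha_conv : ∀ z : H, (z, 0) ∈ A →
      ∃ l : ℝ, Tendsto (fun k => (inner ℝ (M (u k - z)) (u k - z) : ℝ)) atTop (𝓝 l) := by
    intro z hz
    exact ⟨_, tendsto_atTop_ciInf (haz z hz) (hbdd z)⟩
  -- b is antitone
  have hbmono : ∀ k, b (k + 1) ≤ b k := by
    intro k
    by_cases hl0 : lam k = 0
    · have hu : u (k + 1) = u k := by rw [hiter k, hl0]; simp
      simp only [hb_def, hd_def, hu]
      exact le_rfl
    · have hlpos : 0 < lam k := lt_of_le_of_ne (hlam k).1 (Ne.symm hl0)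
      have hm := hAmono (T (u (k + 1)), M (u (k + 1) - T (u (k + 1)))) (hT _)
        (T (u k), M (u k - T (u k))) (hT _)
      have h1 : M (u (k + 1) - T (u (k + 1))) - M (u k - T (u k))
          = -M (d (k + 1) - d k) := by
        rw [← map_sub, ← map_neg]; congr 1
        simp only [hd_def]; rw [hiter k]; abel
      have h2 : T (u (k + 1)) - T (u k) = (d (k + 1) - d k) + lam k • d k := by
        simp only [hd_def]; rw [hiter k]; abel
      simp only [h1, h2] at hm
      rw [inner_neg_left, inner_add_right, real_inner_smul_right] at hm
      have hE := hMpos (d (k + 1) - d k)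
      set X : ℝ := (inner ℝ (M (d (k + 1) - d k)) (d k) : ℝ) with hX_def
      have h4 : X ≤ 0 := by
        by_contra h
        push_neg at h
        have := mul_pos hlpos h
        linarith
      have h5 : b (k + 1) = b k + 2 * X + (inner ℝ (M (d (k + 1) - d k)) (d (k + 1) - d k) : ℝ) := by
        have h6 : d k + (d (k + 1) - d k) = d (k + 1) := by abel
        have h7 := hexpand (d k) (d (k + 1) - d k) 1
        simp only [one_smul, one_pow] at h7
        rw [h6] at h7
        simp only [hb_def, hX_def]
        linarith [h7]
      have h8 : (2 - lam k) * X ≤ 0 :=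
        mul_nonpos_of_nonneg_of_nonpos (by linarith [(hlam k).2]) h4
      linarith
  have hbanti : Antitone b := antitone_nat_of_succ_le hbmono
  have hbbdd : BddBelow (Set.range b) := ⟨0, fun y ⟨k, hk⟩ => hk ▸ hMpos _⟩
  -- partial sums bound
  have hsum : ∀ n, ∑ k ∈ Finset.range n, lam k * (2 - lam k) * b k
      ≤ (inner ℝ (M (u 0 - z0)) (u 0 - z0) : ℝ)
        - (inner ℝ (M (u n - z0)) (u n - z0) : ℝ) := by
    intro n
    induction n with
    | zero => simp
    | succ n ih =>
        rw [Finset.sum_range_succ]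
        have := hkey z0 hz0 n
        linarith
  -- b tends to 0
  have hb0 : Tendsto b atTop (𝓝 0) := by
    have hβconv : Tendsto b atTop (𝓝 (⨅ k, b k)) := tendsto_atTop_ciInf hbanti hbbdd
    have hβnn : (0 : ℝ) ≤ ⨅ k, b k := le_ciInf fun k => hMpos _
    have hβle : ∀ k, (⨅ k, b k) ≤ b k := fun k => ciInf_le hbbdd k
    have hβ0 : (⨅ k, b k) = 0 := by
      by_contra hne
      have hβpos : 0 < ⨅ k, b k := lt_of_le_of_ne hβnn (Ne.symm hne)
      set β := ⨅ k, b k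
      set a0 := (inner ℝ (M (u 0 - z0)) (u 0 - z0) : ℝ) with ha0_def
      obtain ⟨n, hn⟩ := (hdiv.eventually_ge_atTop ((a0 + 1) / β)).exists
      have h1 : ∀ k ∈ Finset.range n, lam k * (2 - lam k) * β ≤ lam k * (2 - lam k) * b k := by
        intro k _
        exact mul_le_mul_of_nonneg_left (hβle k)
          (mul_nonneg (hlam k).1 (by linarith [(hlam k).2]))
      have h2 : (∑ k ∈ Finset.range n, lam k * (2 - lam k)) * β
          ≤ ∑ k ∈ Finset.range n, lam k * (2 - lam k) * b k := by
        rw [Finset.sum_mul]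
        exact Finset.sum_le_sum fun k hk => by
          have := h1 k hk; linarith [this]
      have h3 := hsum n
      have h4 : (a0 + 1) / β * β ≤ (∑ k ∈ Finset.range n, lam k * (2 - lam k)) * β :=
        mul_le_mul_of_nonneg_right hn (le_of_lt hβpos)
      rw [div_mul_cancel₀ _ (ne_of_gt hβpos)] at h4
      have h5 := hMpos (u n - z0)
      linarith
    rw [hβ0] at hβconv
    exact hβconv
  -- operator norm bound for the seminorm
  have hnormM : ∀ x : H, ‖M x‖ ^ 2 ≤ ‖M‖ * (inner ℝ (M x) x : ℝ) := by
    intro x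
    have h1 := psdCS M hMsa hMpos x (M x)
    have h2 : (inner ℝ (M x) (M x) : ℝ) = ‖M x‖ ^ 2 := real_inner_self_eq_norm_sq _
    have h3 : (inner ℝ (M (M x)) (M x) : ℝ) ≤ ‖M‖ * ‖M x‖ * ‖M x‖ :=
      (real_inner_le_norm _ _).trans
        (mul_le_mul_of_nonneg_right (M.le_opNorm (M x)) (norm_nonneg _))
    by_cases hx : ‖M x‖ = 0
    · rw [hx]; norm_num
      exact mul_nonneg (norm_nonneg _) (hMpos x)
    · have hxpos : 0 < ‖M x‖ := lt_of_le_of_ne (norm_nonneg _) (Ne.symm hx)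
      nlinarith [hMpos x, mul_pos hxpos hxpos]
  have hsqrtM : ∀ x : H, ‖M x‖ ≤ Real.sqrt (‖M‖ * (inner ℝ (M x) x : ℝ)) := by
    intro x
    rw [← Real.sqrt_sq (norm_nonneg (M x))]
    exact Real.sqrt_le_sqrt (hnormM x)
  have hMd0 : Tendsto (fun k => ‖M (d k)‖) atTop (𝓝 0) := by
    have hs : Tendsto (fun k => Real.sqrt (‖M‖ * b k)) atTop (𝓝 0) := by
      have h1 : Tendsto (fun k => ‖M‖ * b k) atTop (𝓝 (‖M‖ * 0)) := hb0.const_mul _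
      rw [mul_zero] at h1
      have h2 := (Real.continuous_sqrt.tendsto 0).comp h1
      rw [Real.sqrt_zero] at h2
      exact h2
    exact tendsto_of_tendsto_of_tendsto_of_le_of_le tendsto_const_nhds hs
      (fun k => norm_nonneg _) (fun k => hsqrtM (d k))
  -- boundedness of T (u k)
  set a0 : ℝ := (inner ℝ (M (u 0 - z0)) (u 0 - z0) : ℝ) with ha0_def
  set R : ℝ := ‖z0‖ + |L| * Real.sqrt (‖M‖ * a0) with hR_def
  have hwbd : ∀ k, ‖T (u k)‖ ≤ R := by
    intro k
    have h1 := hT (u k)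
    rw [map_sub] at h1
    have h2 : (z0, M z0 - M z0) ∈ A := by rw [sub_self]; exact hz0
    have h3 := hLip (M (u k)) (M z0) (T (u k)) z0 h1 h2
    rw [← map_sub] at h3
    have h5 : ‖M (u k - z0)‖ ≤ Real.sqrt (‖M‖ * a0) := by
      refine (hsqrtM _).trans (Real.sqrt_le_sqrt ?_)
      have := haz z0 hz0 (Nat.zero_le k)
      exact mul_le_mul_of_nonneg_left this (norm_nonneg (M : H →L[ℝ] H))
    have h6 : ‖T (u k) - z0‖ ≤ |L| * Real.sqrt (‖M‖ * a0) := by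
      calc ‖T (u k) - z0‖ ≤ L * ‖M (u k - z0)‖ := h3
        _ ≤ |L| * ‖M (u k - z0)‖ :=
            mul_le_mul_of_nonneg_right (le_abs_self L) (norm_nonneg _)
        _ ≤ |L| * Real.sqrt (‖M‖ * a0) :=
            mul_le_mul_of_nonneg_left h5 (abs_nonneg L)
    calc ‖T (u k)‖ = ‖(T (u k) - z0) + z0‖ := by rw [sub_add_cancel]
      _ ≤ ‖T (u k) - z0‖ + ‖z0‖ := norm_add_le _ _
      _ ≤ R := by rw [hR_def]; linarith
  -- weak cluster points along subsequences are zeros of A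
  have hzl : ∀ σ : ℕ → ℕ, StrictMono σ → ∀ q : H,
      (∀ v : H, Tendsto (fun j => (inner ℝ (T (u (σ j))) v : ℝ)) atTop (𝓝 (inner ℝ q v))) →
      (q, 0) ∈ A := by
    intro σ hσ q hq
    apply hAmax
    intro r hr
    have hm : ∀ j, 0 ≤ (inner ℝ (M (u (σ j) - T (u (σ j))) - r.2) (T (u (σ j)) - r.1) : ℝ) :=
      fun j => hAmono _ (hT _) r hr
    have hMd : Tendsto (fun j => ‖M (d (σ j))‖) atTop (𝓝 0) :=
      hMd0.comp (hσ.tendsto_atTop)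
    have hdm : ∀ j, M (u (σ j) - T (u (σ j))) = -M (d (σ j)) := by
      intro j; rw [← map_neg]; congr 1; simp only [hd_def]; abel
    have hpt : ∀ j, (inner ℝ (M (u (σ j) - T (u (σ j))) - r.2) (T (u (σ j)) - r.1) : ℝ)
        = inner ℝ (M (u (σ j) - T (u (σ j)))) (T (u (σ j)) - r.1)
          + (inner ℝ r.2 r.1 - inner ℝ r.2 (T (u (σ j)))) := by
      intro j
      rw [inner_sub_left]
      simp only [inner_sub_right]
      ring
    have t1 : Tendsto (fun j =>
        (inner ℝ (M (u (σ j) - T (u (σ j)))) (T (u (σ j)) - r.1) : ℝ)) atTop (𝓝 0) := by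
      rw [tendsto_zero_iff_abs_tendsto_zero]
      apply squeeze_zero (g := fun j => ‖M (d (σ j))‖ * (R + ‖r.1‖)) (fun j => abs_nonneg _)
      · intro j
        rw [hdm j, inner_neg_left, abs_neg]
        calc |(inner ℝ (M (d (σ j))) (T (u (σ j)) - r.1) : ℝ)|
            ≤ ‖M (d (σ j))‖ * ‖T (u (σ j)) - r.1‖ := abs_real_inner_le_norm _ _
          _ ≤ ‖M (d (σ j))‖ * (R + ‖r.1‖) := by
              apply mul_le_mul_of_nonneg_left _ (norm_nonneg _)
              exact (norm_sub_le _ _).trans (add_le_add_left (hwbd (σ j)) _)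
      · have := hMd.mul_const (R + ‖r.1‖)
        simpa using this
    have t2 : Tendsto (fun j => (inner ℝ r.2 (T (u (σ j))) : ℝ)) atTop (𝓝 (inner ℝ r.2 q)) := by
      have h := hq r.2
      have he : (fun j => (inner ℝ (T (u (σ j))) r.2 : ℝ)) = fun j => (inner ℝ r.2 (T (u (σ j))) : ℝ) := by
        funext j; rw [real_inner_comm]
      rw [he] at h
      rw [real_inner_comm r.2 q] at h
      exact h
    have key : Tendsto (fun j =>
        (inner ℝ (M (u (σ j) - T (u (σ j))) - r.2) (T (u (σ j)) - r.1) : ℝ)) atTop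
        (𝓝 (0 + ((inner ℝ r.2 r.1 : ℝ) - inner ℝ r.2 q))) := by
      simp only [hpt]
      exact t1.add (tendsto_const_nhds.sub t2)
    have hge := ge_of_tendsto key (Filter.Eventually.of_forall hm)
    have hval : ((0:H), (0:H)).2 = (0 : H) := rfl
    show 0 ≤ (inner ℝ ((q, (0:H)).2 - r.2) ((q, (0:H)).1 - r.1) : ℝ)
    have : (inner ℝ ((0:H) - r.2) (q - r.1) : ℝ) = 0 + ((inner ℝ r.2 r.1 : ℝ) - inner ℝ r.2 q) := by
      rw [zero_sub, inner_neg_left, inner_sub_right]; ring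
    rw [show ((q, (0:H)).2 : H) - r.2 = (0:H) - r.2 from rfl]
    rw [show ((q, (0:H)).1 : H) - r.1 = q - r.1 from rfl]
    rw [this]
    exact hge
  -- Opial-type uniqueness of weak subsequential limits
  have hopial : ∀ q q' : H, (q, 0) ∈ A → (q', 0) ∈ A →
      (∃ σ : ℕ → ℕ, StrictMono σ ∧
        ∀ v : H, Tendsto (fun j => (inner ℝ (T (u (σ j))) v : ℝ)) atTop (𝓝 (inner ℝ q v))) →
      (∃ σ' : ℕ → ℕ, StrictMono σ' ∧
        ∀ v : H, Tendsto (fun j => (inner ℝ (T (u (σ' j))) v : ℝ)) atTop (𝓝 (inner ℝ q' v))) →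
      q = q' := by
    rintro q q' hqz hq'z ⟨σ, hσ, hwq⟩ ⟨σ', hσ', hwq'⟩
    obtain ⟨lq, hlq⟩ := ha_conv q hqz
    obtain ⟨lq', hlq'⟩ := ha_conv q' hq'z
    have hid : ∀ k, (inner ℝ (M (u k)) (q' - q) : ℝ)
        = ((inner ℝ (M (u k - q)) (u k - q) : ℝ) - inner ℝ (M (u k - q')) (u k - q')
            + ((inner ℝ (M q') q' : ℝ) - inner ℝ (M q) q)) / 2 := by
      intro k
      rw [hexpand_sub (u k) q, hexpand_sub (u k) q', inner_sub_right]
      linear_combination hsym (u k) q' - hsym (u k) q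
    set l : ℝ := (lq - lq' + ((inner ℝ (M q') q' : ℝ) - inner ℝ (M q) q)) / 2 with hl_def
    have hMu : Tendsto (fun k => (inner ℝ (M (u k)) (q' - q) : ℝ)) atTop (𝓝 l) := by
      have h1 : Tendsto (fun k => ((inner ℝ (M (u k - q)) (u k - q) : ℝ)
          - inner ℝ (M (u k - q')) (u k - q')
          + ((inner ℝ (M q') q' : ℝ) - inner ℝ (M q) q)) / 2) atTop (𝓝 l) :=
        ((hlq.sub hlq').add tendsto_const_nhds).div_const 2
      simp only [hid]
      exact h1
    have hMw : Tendsto (fun k => (inner ℝ (M (T (u k))) (q' - q) : ℝ)) atTop (𝓝 l) := by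
      have hptw : ∀ k, (inner ℝ (M (T (u k))) (q' - q) : ℝ)
          = inner ℝ (M (u k)) (q' - q) + inner ℝ (M (d k)) (q' - q) := by
        intro k
        rw [← inner_add_left, ← map_add]
        congr 2
        simp only [hd_def]; abel
      have h2 : Tendsto (fun k => (inner ℝ (M (d k)) (q' - q) : ℝ)) atTop (𝓝 0) := by
        rw [tendsto_zero_iff_abs_tendsto_zero]
        apply squeeze_zero (g := fun k => ‖M (d k)‖ * ‖q' - q‖) (fun k => abs_nonneg _)
        · intro k; exact abs_real_inner_le_norm _ _
        · have := hMd0.mul_const ‖q' - q‖; simpa using this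
      have h3 := hMu.add h2
      rw [add_zero] at h3
      simp only [hptw]
      exact h3
    have hsub : ∀ (τ : ℕ → ℕ), StrictMono τ → ∀ p0 : H,
        (∀ v : H, Tendsto (fun j => (inner ℝ (T (u (τ j))) v : ℝ)) atTop (𝓝 (inner ℝ p0 v))) →
        l = inner ℝ p0 (M (q' - q)) := by
      intro τ hτ p0 hp0
      have hA := hMw.comp hτ.tendsto_atTop
      have hB := hp0 (M (q' - q))
      have he : ∀ j, (inner ℝ (M (T (u (τ j)))) (q' - q) : ℝ)
          = inner ℝ (T (u (τ j))) (M (q' - q)) := fun j => hMsa _ _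
      have hA' : Tendsto (fun j => (inner ℝ (T (u (τ j))) (M (q' - q)) : ℝ)) atTop (𝓝 l) := by
        have he2 : (fun j => (inner ℝ (M (T (u (τ j)))) (q' - q) : ℝ))
            = fun j => (inner ℝ (T (u (τ j))) (M (q' - q)) : ℝ) := funext he
        rw [← he2]
        exact hA
      exact tendsto_nhds_unique hA' hB
    have e1 := hsub σ hσ q hwq
    have e2 := hsub σ' hσ' q' hwq'
    have hnull : (inner ℝ (M (q' - q)) (q' - q) : ℝ) = 0 := by
      rw [real_inner_comm (q' - q) (M (q' - q)), inner_sub_left, ← e1, ← e2]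
      ring
    have hM0 : M (q' - q) = 0 := by
      have h1 := psdCS M hMsa hMpos (q' - q) (M (q' - q))
      rw [hnull, zero_mul] at h1
      have h3 := sq_nonneg (inner ℝ (M (q' - q)) (M (q' - q)) : ℝ)
      have h4 : (inner ℝ (M (q' - q)) (M (q' - q)) : ℝ) ^ 2 = 0 := le_antisymm h1 h3
      have h5 : (inner ℝ (M (q' - q)) (M (q' - q)) : ℝ) = 0 :=
        pow_eq_zero_iff (by norm_num) |>.1 h4
      exact inner_self_eq_zero.1 h5
    have hMqq : M (q - q') = 0 := by
      have hqq : q - q' = -(q' - q) := by abel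
      rw [hqq, map_neg, hM0, neg_zero]
    have h5 : q' = T q := hTuniq q q' (by rw [hMqq]; exact hq'z)
    have h6 : q = T q := hTuniq q q (by simpa using hqz)
    rw [h5]
    exact h6
  -- weak convergence of T (u k)
  obtain ⟨p, φ, hφ, hweak⟩ := weakBW (fun k => T (u k)) R hwbd
  have hpz : (p, 0) ∈ A := hzl φ hφ p hweak
  have hwconv : ∀ v : H, Tendsto (fun k => (inner ℝ (T (u k)) v : ℝ)) atTop (𝓝 (inner ℝ p v)) := by
    intro v
    by_contra hcon
    rw [Metric.tendsto_atTop] at hcon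
    push_neg at hcon
    obtain ⟨ε, hε, hcon⟩ := hcon
    have hfreq : ∀ N : ℕ, ∃ n > N, ε ≤ dist (inner ℝ (T (u n)) v : ℝ) (inner ℝ p v) := by
      intro N
      obtain ⟨n, hn1, hn2⟩ := hcon (N + 1)
      exact ⟨n, lt_of_lt_of_le (Nat.lt_succ_self N) hn1, hn2⟩
    obtain ⟨ψ, hψ, hP⟩ := Nat.exists_strictMono_subsequence hfreq
    obtain ⟨p', φ', hφ', hweak'⟩ := weakBW (fun j => T (u (ψ j))) R (fun j => hwbd (ψ j))
    have hcomp : ∀ v' : H, Tendsto (fun j => (inner ℝ (T (u ((ψ ∘ φ') j))) v' : ℝ)) atTop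
        (𝓝 (inner ℝ p' v')) := fun v' => hweak' v'
    have hp'z : (p', 0) ∈ A := hzl (ψ ∘ φ') (hψ.comp hφ') p' hcomp
    have hpp' : p = p' := hopial p p' hpz hp'z ⟨φ, hφ, hweak⟩ ⟨ψ ∘ φ', hψ.comp hφ', hcomp⟩
    have hlim := hcomp v
    rw [← hpp'] at hlim
    rw [Metric.tendsto_atTop] at hlim
    obtain ⟨N, hN⟩ := hlim ε hε
    have h2 := hP (φ' N)
    have h3 := hN N le_rfl
    exact absurd h3 (not_lt.2 h2)
  refine ⟨p, hfix p hpz, hwconv, ?_⟩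
  rintro ⟨ε, hε, hεlam⟩ v
  have hε1 : ε ≤ 1 := by
    have h1 := (hεlam 0).1
    have h2 := (hεlam 0).2
    linarith
  set β : ℝ := (inner ℝ p v : ℝ) with hβ_def
  have hbv : Tendsto (fun k => (inner ℝ (T (u k)) v : ℝ)) atTop (𝓝 β) := hwconv v
  have hrec : ∀ k, (inner ℝ (u (k + 1)) v : ℝ)
      = inner ℝ (u k) v + lam k * ((inner ℝ (T (u k)) v : ℝ) - inner ℝ (u k) v) := by
    intro k
    rw [hiter k, inner_add_left, real_inner_smul_left, inner_sub_left]
  rw [Metric.tendsto_atTop]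
  intro η hη
  rw [Metric.tendsto_atTop] at hbv
  obtain ⟨N1, hN1⟩ := hbv (ε * η / 8) (by positivity)
  have hc : ∀ k, k ≥ N1 → |(inner ℝ (u (k + 1)) v : ℝ) - β|
      ≤ (1 - ε) * |(inner ℝ (u k) v : ℝ) - β| + 2 * (ε * η / 8) := by
    intro k hk
    have h2 : (inner ℝ (u (k + 1)) v : ℝ) - β
        = (1 - lam k) * ((inner ℝ (u k) v : ℝ) - β)
          + lam k * ((inner ℝ (T (u k)) v : ℝ) - β) := by
      rw [hrec k]; ring
    have h3 : |(1 - lam k) * ((inner ℝ (u k) v : ℝ) - β)|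
        ≤ (1 - ε) * |(inner ℝ (u k) v : ℝ) - β| := by
      rw [abs_mul]
      apply mul_le_mul_of_nonneg_right _ (abs_nonneg _)
      rw [abs_le]
      exact ⟨by linarith [(hεlam k).2], by linarith [(hεlam k).1]⟩
    have h4 : |lam k * ((inner ℝ (T (u k)) v : ℝ) - β)| ≤ 2 * (ε * η / 8) := by
      rw [abs_mul]
      have h5 : |(inner ℝ (T (u k)) v : ℝ) - β| ≤ ε * η / 8 := by
        have := hN1 k hk
        rw [Real.dist_eq] at this
        linarith
      have h6 : |lam k| ≤ 2 := by
        rw [abs_le]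
        exact ⟨by linarith [(hlam k).1], (hlam k).2⟩
      exact mul_le_mul h6 h5 (abs_nonneg _) (by norm_num)
    calc |(inner ℝ (u (k + 1)) v : ℝ) - β|
        = |(1 - lam k) * ((inner ℝ (u k) v : ℝ) - β)
            + lam k * ((inner ℝ (T (u k)) v : ℝ) - β)| := by rw [h2]
      _ ≤ |(1 - lam k) * ((inner ℝ (u k) v : ℝ) - β)|
            + |lam k * ((inner ℝ (T (u k)) v : ℝ) - β)| := abs_add_le _ _
      _ ≤ (1 - ε) * |(inner ℝ (u k) v : ℝ) - β| + 2 * (ε * η / 8) := add_le_add h3 h4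
  have hind : ∀ m : ℕ, |(inner ℝ (u (N1 + m)) v : ℝ) - β|
      ≤ (1 - ε) ^ m * |(inner ℝ (u N1) v : ℝ) - β| + η / 2 := by
    intro m
    induction m with
    | zero =>
        simp only [Nat.add_zero, pow_zero, one_mul]
        linarith [hη]
    | succ m ih =>
        have h1 := hc (N1 + m) (Nat.le_add_right N1 m)
        have h3 : (0:ℝ) ≤ 1 - ε := by linarith
        have h4 := mul_le_mul_of_nonneg_left ih h3
        have h7 : N1 + (m + 1) = (N1 + m) + 1 := by omega
        rw [h7]
        have h8 : (1 - ε) * ((1 - ε) ^ m * |(inner ℝ (u N1) v : ℝ) - β| + η / 2)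
            = (1 - ε) ^ (m + 1) * |(inner ℝ (u N1) v : ℝ) - β| + (1 - ε) * (η / 2) := by ring
        rw [h8] at h4
        have h9 : 2 * (ε * η / 8) + (1 - ε) * (η / 2) ≤ η / 2 := by nlinarith [mul_pos hε hη]
        linarith
  have hpow : Tendsto (fun m : ℕ => (1 - ε) ^ m * |(inner ℝ (u N1) v : ℝ) - β|) atTop (𝓝 0) := by
    have h1 : Tendsto (fun m : ℕ => (1 - ε) ^ m) atTop (𝓝 0) :=
      tendsto_pow_atTop_nhds_zero_of_lt_one (by linarith) (by linarith)
    have h2 := h1.mul_const (|(inner ℝ (u N1) v : ℝ) - β|)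
    simpa using h2
  rw [Metric.tendsto_atTop] at hpow
  obtain ⟨N2, hN2⟩ := hpow (η / 4) (by positivity)
  refine ⟨N1 + N2, fun k hk => ?_⟩
  have hm : N1 + (k - N1) = k := by omega
  have hm2 : k - N1 ≥ N2 := by omega
  have h1 := hind (k - N1)
  rw [hm] at h1
  have h2 := hN2 (k - N1) hm2
  rw [Real.dist_eq, sub_zero] at h2
  have h3 : (1 - ε) ^ (k - N1) * |(inner ℝ (u N1) v : ℝ) - β| < η / 4 := lt_of_abs_lt h2
  rw [Real.dist_eq]
  have h4 : |(inner ℝ (u k) v : ℝ) - β| < η := by linarith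
  exact h4
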